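/- Let G be a Banach lattice with order continuous norm whose lattice order is given coordinatewise by a Schauder basis. Then for every compact set K ⊂ G and every ε > 0 there exists a positive compact operator S: G → G with S ≤ id_G, ||S||_r ≤ 1, and || |S − id_G|(x) || < ε for all x in K. -/

import Mathlib

open Filter Topology NormedSpace

/-- `dAbs f x` represents `|f|(x)` for a functional `f` on a Banach lattice,
via the Riesz–Kantorovich formula `|f|(x) = sup { f y : |y| ≤ x }` (for `x ≥ 0`). -/
noncomputable def dAbs {E : Type*} [NormedAddCommGroup E] [Lattice E] [IsOrderedAddMonoid E] [HasSolidNorm E] [NormedSpace ℝ E]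
    (f : E →L[ℝ] ℝ) (x : E) : ℝ :=
  sSup (f '' {y | |y| ≤ x})

/-- A bounded operator between Banach lattices is positive. -/
def IsPosOp {E F : Type*} [NormedAddCommGroup E] [Lattice E] [IsOrderedAddMonoid E] [HasSolidNorm E] [NormedSpace ℝ E]
    [NormedAddCommGroup F] [Lattice F] [IsOrderedAddMonoid F] [HasSolidNorm F] [NormedSpace ℝ F] (T : E →L[ℝ] F) : Prop :=
  ∀ x : E, 0 ≤ x → 0 ≤ T x

/-- The order `T ≤ S` between operators: `T x ≤ S x` for all positive `x`. -/
def OpLe {E F : Type*} [NormedAddCommGroup E] [Lattice E] [IsOrderedAddMonoid E] [HasSolidNorm E] [NormedSpace ℝ E]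
    [NormedAddCommGroup F] [Lattice F] [IsOrderedAddMonoid F] [HasSolidNorm F] [NormedSpace ℝ F] (T S : E →L[ℝ] F) : Prop :=
  ∀ x : E, 0 ≤ x → T x ≤ S x

/-- `m` is the modulus `|T|` of a regular operator `T`: the least upper bound
of `T` and `-T` in the operator order. -/
def IsModulus {E F : Type*} [NormedAddCommGroup E] [Lattice E] [IsOrderedAddMonoid E] [HasSolidNorm E] [NormedSpace ℝ E]
    [NormedAddCommGroup F] [Lattice F] [IsOrderedAddMonoid F] [HasSolidNorm F] [NormedSpace ℝ F] (T m : E →L[ℝ] F) : Prop :=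
  OpLe T m ∧ OpLe (-T) m ∧ ∀ S : E →L[ℝ] F, OpLe T S → OpLe (-T) S → OpLe m S

/-- The norm of `G` is order continuous: every downward-directed set with infimum `0`
contains elements of arbitrarily small norm. -/
def OrderContNorm (G : Type*) [NormedAddCommGroup G] [Lattice G] [IsOrderedAddMonoid G] [HasSolidNorm G] : Prop :=
  ∀ A : Set G, A.Nonempty → DirectedOn (· ≥ ·) A → IsGLB A 0 →
    ∀ ε : ℝ, 0 < ε → ∃ a ∈ A, ‖a‖ < ε

/-- The order of `G` is given coordinatewise by the Schauder basis `b` with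
coordinate functionals `c`. -/
def OrderBasis {G : Type*} [NormedAddCommGroup G] [Lattice G] [IsOrderedAddMonoid G] [HasSolidNorm G] [NormedSpace ℝ G]
    (b : ℕ → G) (c : ℕ → G →L[ℝ] ℝ) : Prop :=
  (∀ x : G, Filter.Tendsto (fun N => ∑ i ∈ Finset.range N, c i x • b i)
    Filter.atTop (nhds x)) ∧
  (∀ i j, c i (b j) = if i = j then (1 : ℝ) else 0) ∧
  (∀ x : G, 0 ≤ x ↔ ∀ n, 0 ≤ c n x)

section Aux
variable {G : Type*} [NormedAddCommGroup G] [Lattice G] [IsOrderedAddMonoid G] [HasSolidNorm G] [NormedSpace ℝ G]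

lemma rankOne_compact (f : G →L[ℝ] ℝ) (v : G) :
    IsCompactOperator (fun x => f x • v) := by
  refine ⟨(fun t : ℝ => t • v) '' Metric.closedBall 0 (‖f‖ + 1),
    (isCompact_closedBall 0 _).image (by continuity), ?_⟩
  filter_upwards [Metric.ball_mem_nhds (0 : G) one_pos] with x hx
  exact ⟨f x, by
    simp only [Metric.mem_closedBall, dist_zero_right, Real.norm_eq_abs]
    calc |f x| = ‖f x‖ := rfl
    _ ≤ ‖f‖ * ‖x‖ := f.le_opNorm x
    _ ≤ ‖f‖ * 1 := by
        have := mem_ball_zero_iff.1 hx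
        nlinarith [norm_nonneg f, norm_nonneg x]
    _ ≤ ‖f‖ + 1 := by nlinarith [norm_nonneg f], rfl⟩

end Aux

/-- In a Banach lattice with order continuous norm whose order is given by a basis, the
identity can be approximated on compact sets by positive compact operators `S ≤ id` with
regular norm at most `1`. -/
theorem approx_id_by_positive_compact {G : Type*}
    [NormedAddCommGroup G] [Lattice G] [IsOrderedAddMonoid G] [HasSolidNorm G] [NormedSpace ℝ G] [CompleteSpace G]
    (hoc : OrderContNorm G)
    (b : ℕ → G) (c : ℕ → G →L[ℝ] ℝ) (hbc : OrderBasis b c)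
    (K : Set G) (hK : IsCompact K) (ε : ℝ) (hε : 0 < ε) :
    ∃ S m : G →L[ℝ] G, IsCompactOperator S ∧ IsPosOp S ∧
      IsPosOp (ContinuousLinearMap.id ℝ G - S) ∧ ‖S‖ ≤ 1 ∧
      IsModulus (S - ContinuousLinearMap.id ℝ G) m ∧ ∀ x ∈ K, ‖m x‖ < ε := by
  obtain ⟨hb1, hb2, hb3⟩ := hbc
  -- the partial-sum projections
  set P : ℕ → G →L[ℝ] G := fun N => ∑ i ∈ Finset.range N, (c i).smulRight (b i) with hP
  have hPapp : ∀ N x, P N x = ∑ i ∈ Finset.range N, c i x • b i := by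
    intro N x
    simp [hP, ContinuousLinearMap.sum_apply]
  have hcoord : ∀ N n x, c n (P N x) = if n < N then c n x else 0 := by
    intro N n x
    rw [hPapp, map_sum]
    have : ∀ i ∈ Finset.range N, c n (c i x • b i) = if n = i then c n x else 0 := by
      intro i _
      rw [map_smul, hb2 n i, smul_eq_mul]
      by_cases h : n = i <;> simp [h]
    rw [Finset.sum_congr rfl this, Finset.sum_ite_eq]
    simp [Finset.mem_range]
  have hPpos : ∀ N, IsPosOp (P N) := by
    intro N x hx
    rw [hb3]
    intro n
    rw [hcoord]
    by_cases h : n < N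
    · simpa [h] using (hb3 x).1 hx n
    · simp [h]
  have hIPpos : ∀ N, IsPosOp (ContinuousLinearMap.id ℝ G - P N) := by
    intro N x hx
    rw [hb3]
    intro n
    simp only [ContinuousLinearMap.sub_apply, ContinuousLinearMap.id_apply, map_sub, hcoord]
    by_cases h : n < N
    · simp [h]
    · simpa [h] using (hb3 x).1 hx n
  have hPle : ∀ N (x : G), 0 ≤ x → P N x ≤ x := by
    intro N x hx
    simpa [sub_nonneg] using hIPpos N x hx
  have hPmono : ∀ N (x y : G), x ≤ y → P N x ≤ P N y := by
    intro N x y hxy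
    have := hPpos N (y - x) (sub_nonneg.2 hxy)
    rw [map_sub, sub_nonneg] at this
    exact this
  have habs : ∀ N (x : G), |P N x| ≤ |x| := by
    intro N x
    have hx : (0:G) ≤ |x| := abs_nonneg x
    have h1 : P N x ≤ |x| := (hPmono N x |x| (le_abs_self x)).trans (hPle N _ hx)
    have h2 : -(P N x) ≤ |x| := by
      have : P N (-x) ≤ |x| := (hPmono N (-x) |x| (neg_le_abs x)).trans (hPle N _ hx)
      simpa using this
    exact abs_le'.2 ⟨h1, h2⟩
  have hPnorm : ∀ N (x : G), ‖P N x‖ ≤ ‖x‖ := by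
    intro N x
    have : |P N x| ≤ |(|x|)| := by simpa [abs_abs] using habs N x
    exact HasSolidNorm.solid this |>.trans (by rw [norm_abs_eq_norm])
  have hPcomp : ∀ N, IsCompactOperator (P N) := by
    intro N
    have : IsCompactOperator (fun x : G => ∑ i ∈ Finset.range N, c i x • b i) := by
      induction N with
      | zero => simp only [Finset.sum_range_zero]; exact isCompactOperator_zero
      | succ n ih =>
          simp only [Finset.sum_range_succ]
          exact ih.add (rankOne_compact (c n) (b n))
    have he : (fun x => P N x) = fun x : G => ∑ i ∈ Finset.range N, c i x • b i := by
      funext x; exact hPapp N x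
    rw [show (⇑(P N)) = fun x => P N x from rfl, he]
    exact this
  -- choose N using compactness of K
  obtain ⟨t, _, hcover⟩ := hK.elim_nhds_subcover (fun y => Metric.ball y (ε/6))
    (fun y _ => Metric.ball_mem_nhds y (by linarith))
  have hchoice : ∀ y : G, ∃ Ny : ℕ, ∀ n ≥ Ny, ‖P n y - y‖ < ε/3 := by
    intro y
    have := (Metric.tendsto_atTop.1 (hb1 y)) (ε/3) (by linarith)
    obtain ⟨Ny, hNy⟩ := this
    exact ⟨Ny, fun n hn => by
      have := hNy n hn
      rw [dist_eq_norm] at this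
      simpa [hPapp] using this⟩
  choose F hF using hchoice
  set N := t.sup F with hN
  refine ⟨P N, ContinuousLinearMap.id ℝ G - P N, hPcomp N, hPpos N, ?_, ?_, ?_, ?_⟩
  · -- id - (id - (id - P N))... : IsPosOp (id - P N)
    simpa using hIPpos N
  · exact ContinuousLinearMap.opNorm_le_bound _ zero_le_one
      (fun x => by simpa using hPnorm N x)
  · refine ⟨?_, ?_, ?_⟩
    · intro x hx
      simp only [ContinuousLinearMap.sub_apply, ContinuousLinearMap.id_apply]
      have h1 : P N x ≤ x := hPle N x hx
      have h2 : 0 ≤ P N x := hPpos N x hx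
      calc P N x - x ≤ 0 := sub_nonpos.2 h1
        _ ≤ x - P N x := sub_nonneg.2 (hPle N x hx)
    · intro x hx
      simp
    · intro S h1 h2 x hx
      have := h2 x hx
      simpa using this
  · intro x hx
    obtain ⟨y, hyt, hxy⟩ := Set.mem_iUnion₂.1 (hcover hx)
    have hxy' : ‖x - y‖ < ε/6 := by
      rw [← dist_eq_norm]; exact Metric.mem_ball.1 hxy
    have hy : ‖P N y - y‖ < ε/3 := hF y N (Finset.le_sup hyt)
    have hdiff : ‖P N y - P N x‖ < ε/6 := by
      have := hPnorm N (y - x)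
      rw [map_sub] at this
      calc ‖P N y - P N x‖ ≤ ‖y - x‖ := this
        _ = ‖x - y‖ := norm_sub_rev y x
        _ < ε/6 := hxy'
    have : ‖x - P N x‖ < ε := by
      calc ‖x - P N x‖ = ‖(x - y) + (y - P N y) + (P N y - P N x)‖ := by
            congr 1; abel
        _ ≤ ‖(x - y) + (y - P N y)‖ + ‖P N y - P N x‖ := norm_add_le _ _
        _ ≤ ‖x - y‖ + ‖y - P N y‖ + ‖P N y - P N x‖ := by
            linarith [norm_add_le (x - y) (y - P N y)]
        _ < ε/6 + ε/3 + ε/6 := by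
            have : ‖y - P N y‖ = ‖P N y - y‖ := norm_sub_rev _ _
            linarith [hxy', hy, hdiff]
        _ < ε := by linarith
    simpa using this
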